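/- Let a, c be positive integers with a ≠ c and b, d be integers. Suppose α, β are real numbers with 1 < α < β such that every element of R_{a,b,c,d} lies in (β^{-1}, α^{-1}) ∪ (α, β). Then the chromatic number of the graph G_{a,b,c,d} is at most ⌈log(αβ)/log(α)⌉. -/

import Mathlib

open MeasureTheory Filter

/-- The set `R_{a,b,c,d}` of positive rational values `(an+b)/(cn+d)` not equal to `1`. -/
def Rset (a c : ℕ) (b d : ℤ) : Set ℚ :=
  {q : ℚ | (∃ n : ℕ, 0 < n ∧ q = ((a : ℚ) * n + (b : ℚ)) / ((c : ℚ) * n + (d : ℚ))) ∧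
    0 < q ∧ q ≠ 1}

/-- The graph `G(R)` on the positive integers where distinct `m`, `n` are adjacent
iff `m/n ∈ R` or `n/m ∈ R`. -/
def graphOf (R : Set ℚ) : SimpleGraph ℕ+ where
  Adj m n := m ≠ n ∧ (((m : ℚ) / (n : ℚ)) ∈ R ∨ ((n : ℚ) / (m : ℚ)) ∈ R)
  symm := ⟨fun _ _ h => ⟨h.1.symm, h.2.symm⟩⟩
  loopless := ⟨fun _ h => h.1 rfl⟩

theorem chromatic_bound_of_ne
    (a c : ℕ) (ha : 0 < a) (hc : 0 < c) (hne : a ≠ c) (b d : ℤ)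
    (α β : ℝ) (hα : 1 < α) (hαβ : α < β)
    (hR : ∀ q ∈ Rset a c b d,
      (q : ℝ) ∈ Set.Ioo β⁻¹ α⁻¹ ∨ (q : ℝ) ∈ Set.Ioo α β) :
    (graphOf (Rset a c b d)).chromaticNumber
      ≤ (⌈Real.log (α * β) / Real.log α⌉₊ : ℕ∞) := by
  have hL : 0 < Real.log α := Real.log_pos hα
  have hβ : 1 < β := hα.trans hαβ
  set k := ⌈Real.log (α * β) / Real.log α⌉₊ with hkdef
  have hαβpos : (0:ℝ) < Real.log (α * β) / Real.log α := by
    apply div_pos _ hL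
    apply Real.log_pos
    nlinarith
  have hkpos : 0 < k := Nat.ceil_pos.mpr hαβpos
  have hkge : Real.log (α * β) / Real.log α ≤ (k : ℝ) := Nat.le_ceil _
  haveI : NeZero k := ⟨hkpos.ne'⟩
  -- the coloring function
  set f : ℕ+ → ℤ := fun n => ⌊Real.log (n : ℝ) / Real.log α⌋ with hfdef
  have key : ∀ p q : ℕ+, α < (p:ℝ)/(q:ℝ) → (p:ℝ)/(q:ℝ) < β →
      f q < f p ∧ ((f p - f q : ℤ) : ℝ) < Real.log (α * β) / Real.log α := by
    intro p q h1 h2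
    have hq0 : (0:ℝ) < (q:ℝ) := by exact_mod_cast q.pos
    have hp0 : (0:ℝ) < (p:ℝ) := by exact_mod_cast p.pos
    have hlog : Real.log ((p:ℝ)/(q:ℝ)) = Real.log p - Real.log q :=
      Real.log_div hp0.ne' hq0.ne'
    have hd0 : (0:ℝ) < (p:ℝ)/(q:ℝ) := by positivity
    have h1' : Real.log α < Real.log p - Real.log q := by
      rw [← hlog]; exact Real.log_lt_log (by linarith) h1
    have h2' : Real.log p - Real.log q < Real.log β := by
      rw [← hlog]; exact Real.log_lt_log hd0 h2
    set x := Real.log (p:ℝ) / Real.log α with hx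
    set y := Real.log (q:ℝ) / Real.log α with hy
    have hxy1 : 1 < x - y := by
      rw [hx, hy, div_sub_div_same, lt_div_iff₀ hL]; linarith
    have hxy2 : x - y < Real.log β / Real.log α := by
      rw [hx, hy, div_sub_div_same]
      gcongr
    have ep : f p = ⌊x⌋ := rfl
    have eq' : f q = ⌊y⌋ := rfl
    have hfl : f q < f p := by
      have h : y + 1 ≤ x := by linarith
      have h2 := Int.floor_le_floor h
      rw [Int.floor_add_one] at h2
      omega
    refine ⟨hfl, ?_⟩
    have hsum : Real.log (α * β) / Real.log α = 1 + Real.log β / Real.log α := by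
      rw [Real.log_mul (by linarith) (by linarith), add_div, div_self hL.ne']
    have hfx : (⌊x⌋ : ℝ) ≤ x := Int.floor_le x
    have hfy : y < (⌊y⌋ : ℝ) + 1 := Int.lt_floor_add_one y
    have : ((f p - f q : ℤ) : ℝ) = (⌊x⌋ : ℝ) - (⌊y⌋ : ℝ) := by push_cast [hfdef]; ring
    rw [this, hsum]
    linarith
  -- the coloring
  have hswap : ∀ u v : ℝ, 0 < u → 0 < v → β⁻¹ < u / v → u / v < α⁻¹ →
      α < v / u ∧ v / u < β := by
    intro u v hu hv h1 h2
    have hi1 : α * α⁻¹ = 1 := mul_inv_cancel₀ (by linarith)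
    have hi2 : β * β⁻¹ = 1 := mul_inv_cancel₀ (by linarith)
    have h1' : β⁻¹ * v < u := (lt_div_iff₀ hv).mp h1
    have h2' : u < α⁻¹ * v := (div_lt_iff₀ hv).mp h2
    constructor
    · rw [lt_div_iff₀ hu]; nlinarith
    · rw [div_lt_iff₀ hu]; nlinarith
  have hvalid : ∀ {m n : ℕ+}, (graphOf (Rset a c b d)).Adj m n →
      ((f m : ZMod k) ≠ (f n : ZMod k)) := by
    intro m n hadj heq
    have hm0 : (0:ℝ) < (m:ℝ) := by exact_mod_cast m.pos
    have hn0 : (0:ℝ) < (n:ℝ) := by exact_mod_cast n.pos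
    -- obtain p q with α < p/q < β and {p,q} = {m,n}
    have hratio : (α < (m:ℝ)/(n:ℝ) ∧ (m:ℝ)/(n:ℝ) < β) ∨
        (α < (n:ℝ)/(m:ℝ) ∧ (n:ℝ)/(m:ℝ) < β) := by
      rcases hadj.2 with hmem | hmem
      · rcases hR _ hmem with ⟨h1, h2⟩ | ⟨h1, h2⟩
        · push_cast at h1 h2
          exact Or.inr (hswap _ _ hm0 hn0 h1 h2)
        · push_cast at h1 h2
          exact Or.inl ⟨h1, h2⟩
      · rcases hR _ hmem with ⟨h1, h2⟩ | ⟨h1, h2⟩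
        · push_cast at h1 h2
          exact Or.inl (hswap _ _ hn0 hm0 h1 h2)
        · push_cast at h1 h2
          exact Or.inr ⟨h1, h2⟩
    have main : ∀ p q : ℕ+, α < (p:ℝ)/(q:ℝ) → (p:ℝ)/(q:ℝ) < β →
        ((f p : ZMod k) = (f q : ZMod k)) → False := by
      intro p q h1 h2 he
      obtain ⟨hlt, hub⟩ := key p q h1 h2
      have hdvd : (k : ℤ) ∣ f p - f q := by
        rw [ZMod.intCast_eq_intCast_iff] at he
        exact (Int.ModEq.dvd he.symm)
      have hle : (k : ℤ) ≤ f p - f q := Int.le_of_dvd (by omega) hdvd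
      have : ((f p - f q : ℤ) : ℝ) < (k : ℝ) := lt_of_lt_of_le hub hkge
      have : (f p - f q : ℤ) < (k : ℤ) := by exact_mod_cast this
      omega
    rcases hratio with ⟨h1, h2⟩ | ⟨h1, h2⟩
    · exact main m n h1 h2 heq
    · exact main n m h1 h2 heq.symm
  have hcol : (graphOf (Rset a c b d)).Colorable k := by
    have C : (graphOf (Rset a c b d)).Coloring (ZMod k) :=
      SimpleGraph.Coloring.mk (fun n => (f n : ZMod k)) (fun hadj => hvalid hadj)
    have := C.colorable
    rwa [ZMod.card k] at this
  have := hcol.chromaticNumber_le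
  exact_mod_cast this
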